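/- Let q > p₀ > p₁ > ... > p_k > p_{k+1} > 0 be real numbers, let r₀,...,r_k, M, ε > 0, and let u be a finite sequence of reals with ∑ₙ |u(n)|^{p_i} < r_i for all i = 0,...,k. Then there exists a nonempty finite sequence v of nonnegative reals such that ∑ₙ v(n)^q < ε, ∑ₙ |(u⌢v)(n)|^{p_i} < r_i for all i = 0,...,k, and ∑ₙ |(u⌢v)(n)|^{p_{k+1}} > M. -/

import Mathlib

/-- For a finite real sequence `w` (a list) and exponent `p`, `∑ₙ |w(n)|^p`. -/
noncomputable def psum (p : ℝ) (w : List ℝ) : ℝ := (w.map fun t => |t| ^ p).sum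

theorem psum_nonneg (e : ℝ) (w : List ℝ) : 0 ≤ psum e w := by
  apply List.sum_nonneg
  intro x hx
  simp only [List.mem_map] at hx
  obtain ⟨t, _, rfl⟩ := hx
  positivity

theorem psum_append (e : ℝ) (u v : List ℝ) :
    psum e (u ++ v) = psum e u + psum e v := by
  simp [psum]

/-- The extension claim: if `q > p 0 > p 1 > ⋯ > p (k+1) > 0`, `r_i, M, ε > 0` and
`u` is a finite real sequence with `∑ |u(n)|^{p i} < r i` for `i ≤ k`, then there is a
nonempty finite sequence `v` of nonnegative reals with `∑ v(n)^q < ε`,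
`∑ |(u⌢v)(n)|^{p i} < r i` for `i ≤ k`, and `∑ |(u⌢v)(n)|^{p (k+1)} > M`. -/
theorem extension_claim (k : ℕ) (q : ℝ) (p : Fin (k + 2) → ℝ)
    (hq : p 0 < q) (hanti : StrictAnti p) (hpos : 0 < p (Fin.last (k + 1)))
    (r : Fin (k + 1) → ℝ) (hr : ∀ i, 0 < r i) (M ε : ℝ) (hM : 0 < M) (hε : 0 < ε)
    (u : List ℝ) (hu : ∀ i : Fin (k + 1), psum (p i.castSucc) u < r i) :
    ∃ v : List ℝ, v ≠ [] ∧ (∀ t ∈ v, (0:ℝ) ≤ t) ∧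
      psum q v < ε ∧
      (∀ i : Fin (k + 1), psum (p i.castSucc) (u ++ v) < r i) ∧
      M < psum (p (Fin.last (k + 1))) (u ++ v) := by
  set s := p (Fin.last (k + 1)) with hs_def
  have hs : 0 < s := hpos
  have hps : ∀ i : Fin (k + 1), s < p i.castSucc := fun i =>
    hanti (Fin.castSucc_lt_last i)
  have h0last : (0 : Fin (k + 2)) < Fin.last (k + 1) := by
    simp [Fin.lt_def]
  have hqs : s < q := lt_trans (hanti h0last) hq
  -- key eventual estimate
  have key : ∀ e t : ℝ, s < e → 0 < t →
      ∀ᶠ c in nhdsWithin (0:ℝ) (Set.Ioi 0), (M + 2) * c ^ (e - s) < t := by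
    intro e t he ht
    have ha : (0:ℝ) < e - s := by linarith
    have hcont : ContinuousAt (fun x : ℝ => x ^ (e - s)) 0 :=
      Real.continuousAt_rpow_const 0 (e - s) (Or.inr ha.le)
    have htend : Filter.Tendsto (fun c : ℝ => (M + 2) * c ^ (e - s))
        (nhdsWithin (0:ℝ) (Set.Ioi 0)) (nhds 0) := by
      have h1 : Filter.Tendsto (fun x : ℝ => x ^ (e - s)) (nhds (0:ℝ)) (nhds 0) := by
        have := hcont.tendsto
        rwa [Real.zero_rpow (ne_of_gt ha)] at this
      have h2 : Filter.Tendsto (fun c : ℝ => (M + 2) * c ^ (e - s))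
          (nhdsWithin (0:ℝ) (Set.Ioi 0)) (nhds ((M + 2) * 0)) :=
        (h1.const_mul (M + 2)).mono_left nhdsWithin_le_nhds
      simpa using h2
    exact htend.eventually_lt_const ht
  have h1 : ∀ᶠ c in nhdsWithin (0:ℝ) (Set.Ioi 0), (M + 2) * c ^ (q - s) < ε :=
    key q ε hqs hε
  have h2 : ∀ᶠ c in nhdsWithin (0:ℝ) (Set.Ioi 0),
      ∀ i : Fin (k + 1), (M + 2) * c ^ (p i.castSucc - s) < r i - psum (p i.castSucc) u := by
    rw [Filter.eventually_all]
    intro i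
    exact key _ _ (hps i) (by linarith [hu i])
  have h3 : ∀ᶠ c in nhdsWithin (0:ℝ) (Set.Ioi 0), c < 1 := by
    apply Filter.Eventually.filter_mono nhdsWithin_le_nhds
    exact eventually_lt_nhds one_pos
  have h4 : ∀ᶠ c in nhdsWithin (0:ℝ) (Set.Ioi 0), c ∈ Set.Ioi (0:ℝ) :=
    self_mem_nhdsWithin
  obtain ⟨c, hc1, hc2, hc3, hc0⟩ := (h1.and (h2.and (h3.and h4))).exists
  rw [Set.mem_Ioi] at hc0
  -- define N and v
  set N : ℕ := ⌈(M + 1) / c ^ s⌉₊ with hN_def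
  have hcs : 0 < c ^ s := Real.rpow_pos_of_pos hc0 s
  have hdivpos : 0 < (M + 1) / c ^ s := by positivity
  have hNpos : 0 < N := Nat.ceil_pos.mpr hdivpos
  have hN1 : (M + 1) / c ^ s ≤ (N : ℝ) := Nat.le_ceil _
  have hN2 : (N : ℝ) < (M + 2) / c ^ s := by
    have h := Nat.ceil_lt_add_one (le_of_lt hdivpos)
    have hcs1 : c ^ s ≤ 1 := Real.rpow_le_one (le_of_lt hc0) (le_of_lt hc3) (le_of_lt hs)
    have : (1:ℝ) ≤ 1 / c ^ s := by
      rw [le_div_iff₀ hcs]; linarith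
    calc (N : ℝ) < (M + 1) / c ^ s + 1 := h
      _ ≤ (M + 1) / c ^ s + 1 / c ^ s := by linarith
      _ = (M + 2) / c ^ s := by ring
  refine ⟨List.replicate N c, ?_, ?_, ?_, ?_, ?_⟩
  · simp only [ne_eq, List.replicate_eq_nil_iff]
    omega
  · intro t ht
    rw [List.eq_of_mem_replicate ht]
    exact le_of_lt hc0
  all_goals {
    have hpsum_v : ∀ e : ℝ, psum e (List.replicate N c) = N * c ^ e := by
      intro e
      simp [psum, List.map_replicate, List.sum_replicate, abs_of_pos hc0, nsmul_eq_mul]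
    have hbound : ∀ e : ℝ, s < e → (N : ℝ) * c ^ e < (M + 2) * c ^ (e - s) := by
      intro e he
      have hce : 0 < c ^ e := Real.rpow_pos_of_pos hc0 e
      calc (N : ℝ) * c ^ e < (M + 2) / c ^ s * c ^ e := by
            exact mul_lt_mul_of_pos_right hN2 hce
        _ = (M + 2) * c ^ (e - s) := by
            rw [Real.rpow_sub hc0]; ring
    first
    | -- psum q v < ε
      calc psum q (List.replicate N c) = N * c ^ q := hpsum_v q
        _ < (M + 2) * c ^ (q - s) := hbound q hqs
        _ < ε := hc1
    | -- middle conditions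
      (intro i
       rw [psum_append, hpsum_v]
       have := hbound (p i.castSucc) (hps i)
       have := hc2 i
       linarith)
    | -- last condition
      (rw [psum_append, hpsum_v]
       have hlow : M + 1 ≤ (N : ℝ) * c ^ s := by
         have := mul_le_mul_of_nonneg_right hN1 (le_of_lt hcs)
         rwa [div_mul_cancel₀] at this
         exact ne_of_gt hcs
       have := psum_nonneg s u
       linarith)
  }
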